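/- arXiv:1011.5237 — 9 statements merged into one kernel-verified Lean document; each statement's English description precedes it below -/
import Mathlib

section
/- Let P and Q be orthogonal projections on a complex Hilbert space H and let T = PQ. Then ‖Tx‖² = ⟨Tx, x⟩ for every x in the orthogonal complement of the kernel of T. -/
open ContinuousLinearMap Submodule LinearMap

variable {H : Type*} [NormedAddCommGroup H] [InnerProductSpace ℂ H] [CompleteSpace H]

/-- `P` is an orthogonal projection: `P² = P = P*`. -/
def IsOrthoProj (P : H →L[ℂ] H) : Prop :=
  P ∘L P = P ∧ ContinuousLinearMap.adjoint P = P

/-- The orthogonal projection onto a (complete, i.e. closed) subspace,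
as an operator on `H`. -/
noncomputable def projOn (K : Submodule ℂ H) [CompleteSpace K] : H →L[ℂ] H :=
  K.subtypeL.comp (orthogonalProjection K)

/-- The orthogonal projection onto a closed subspace, as an operator on `H`. -/
noncomputable def projOnc (K : Submodule ℂ H) (hK : IsClosed (K : Set H)) : H →L[ℂ] H :=
  haveI : CompleteSpace K := hK.completeSpace_coe
  K.subtypeL.comp (orthogonalProjection K)

theorem stmt2 (P Q T : H →L[ℂ] H) (hP : IsOrthoProj P) (hQ : IsOrthoProj Q)
    (hT : T = P ∘L Q) :
    ∀ x ∈ (LinearMap.ker (T : H →ₗ[ℂ] H))ᗮ, (‖T x‖ : ℂ) ^ 2 = inner ℂ (T x) x := by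
  obtain ⟨hP2, hPa⟩ := hP
  obtain ⟨hQ2, hQa⟩ := hQ
  have hPP : ∀ y, P (P y) = P y := fun y => DFunLike.congr_fun hP2 y
  have hQQ : ∀ y, Q (Q y) = Q y := fun y => DFunLike.congr_fun hQ2 y
  have hPsym : ∀ u v : H, (inner ℂ (P u) v : ℂ) = inner ℂ u (P v) := fun u v => by
    conv_lhs => rw [← hPa]
    rw [ContinuousLinearMap.adjoint_inner_left]
  have hQsym : ∀ u v : H, (inner ℂ (Q u) v : ℂ) = inner ℂ u (Q v) := fun u v => by
    conv_lhs => rw [← hQa]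
    rw [ContinuousLinearMap.adjoint_inner_left]
  subst hT
  intro x hx
  have key : Q (P (Q x)) - P (Q x) ∈ LinearMap.ker ((P ∘L Q : H →L[ℂ] H) : H →ₗ[ℂ] H) := by
    rw [LinearMap.mem_ker, map_sub]
    simp only [ContinuousLinearMap.coe_coe, ContinuousLinearMap.comp_apply, hQQ, sub_self]
  have h0 : (inner ℂ (Q (P (Q x)) - P (Q x)) x : ℂ) = 0 :=
    (Submodule.mem_orthogonal _ x).mp hx _ key
  rw [inner_sub_left, sub_eq_zero] at h0
  have h2 : (inner ℂ (Q (P (Q x))) x : ℂ) = inner ℂ (P (Q x)) (P (Q x)) := by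
    rw [hQsym]
    conv_lhs => rw [← hPP (Q x), hPsym]
  have hn : (inner ℂ (P (Q x)) (P (Q x)) : ℂ) = (‖P (Q x)‖ : ℂ) ^ 2 := by
    rw [inner_self_eq_norm_sq_to_K]; norm_cast
  simp only [ContinuousLinearMap.comp_apply]
  rw [← h0, h2, hn]
end

section
/- Let T be a bounded operator on a complex Hilbert space H with ‖Tx‖² = ⟨Tx, x⟩ for all x in N(T)^⊥. Then T*T = P_{N(T)^⊥} T, where P_{N(T)^⊥} is the orthogonal projection onto the orthogonal complement of the kernel of T. -/
open ContinuousLinearMap Submodule LinearMap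

variable {H : Type*} [NormedAddCommGroup H] [InnerProductSpace ℂ H] [CompleteSpace H]

theorem stmt3 (T : H →L[ℂ] H)
    (h : ∀ x ∈ (LinearMap.ker (T : H →ₗ[ℂ] H))ᗮ, (‖T x‖ : ℂ) ^ 2 = inner ℂ (T x) x) :
    ContinuousLinearMap.adjoint T ∘L T = projOn (LinearMap.ker (T : H →ₗ[ℂ] H))ᗮ ∘L T := by
  haveI : CompleteSpace (LinearMap.ker (T : H →ₗ[ℂ] H)) :=
    (isClosed_ker T).completeSpace_coe
  set M : Submodule ℂ H := (LinearMap.ker (T : H →ₗ[ℂ] H))ᗮ with hM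
  -- the auxiliary operator on M
  set A : M →ₗ[ℂ] M :=
    (orthogonalProjection M).toLinearMap ∘ₗ
      ((ContinuousLinearMap.adjoint T ∘L (T - 1)).toLinearMap ∘ₗ M.subtype) with hA
  have hApply : ∀ x : M, ((A x : M) : H) =
      (orthogonalProjection M ((ContinuousLinearMap.adjoint T ∘L (T - 1)) (x : H)) : H) := by
    intro x; rfl
  have hdiag : ∀ x : M, (inner ℂ (A x) x : ℂ) = 0 := by
    intro x
    have hx := h (x : H) x.2
    have h1 : (inner ℂ (T (x : H)) (T (x : H) - (x : H)) : ℂ) = 0 := by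
      rw [inner_sub_right, sub_eq_zero, ← hx, inner_self_eq_norm_sq_to_K]
      norm_cast
    have h2 : (inner ℂ ((ContinuousLinearMap.adjoint T ∘L (T - 1)) (x : H)) ((x : M) : H) : ℂ) = 0 := by
      rw [ContinuousLinearMap.comp_apply, ContinuousLinearMap.adjoint_inner_left]
      have hsub : ((T - 1) (x : H)) = T (x : H) - (x : H) := by simp
      rw [hsub, ← inner_conj_symm, h1, map_zero]
    have hp := inner_orthogonalProjection_eq_of_mem_right (K := M) x
      ((ContinuousLinearMap.adjoint T ∘L (T - 1)) (x : H))
    rw [← hp] at h2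
    exact h2
  have hA0 : A = 0 := (inner_map_self_eq_zero A).mp hdiag
  -- key identity : for x y ∈ M, ⟪Tx, Ty⟫ = ⟪Tx, y⟫
  have key : ∀ x y : M, (inner ℂ (T (x : H)) (T (y : H)) : ℂ) = inner ℂ (T (x : H)) ((y : H)) := by
    intro x y
    have h0 : (inner ℂ (A y) x : ℂ) = 0 := by rw [hA0]; simp
    have h3 : (inner ℂ ((ContinuousLinearMap.adjoint T ∘L (T - 1)) (y : H)) ((x : M) : H) : ℂ) = 0 := by
      have hp := inner_orthogonalProjection_eq_of_mem_right (K := M) x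
        ((ContinuousLinearMap.adjoint T ∘L (T - 1)) (y : H))
      rw [← hp]
      exact h0
    rw [ContinuousLinearMap.comp_apply, ContinuousLinearMap.adjoint_inner_left] at h3
    have hsub : ((T - 1) (y : H)) = T (y : H) - (y : H) := by simp
    rw [hsub] at h3
    have h5 : (inner ℂ (T (x : H)) (T (y : H) - (y : H)) : ℂ) = 0 := by
      rw [← inner_conj_symm, h3, map_zero]
    rwa [inner_sub_right, sub_eq_zero] at h5
  -- T kills the component orthogonal to M
  have hTP : ∀ w : H, T w = T ((orthogonalProjection M w : M) : H) := by
    intro w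
    have hmem : w - (orthogonalProjection M w : H) ∈ Mᗮ :=
      Submodule.sub_starProjection_mem_orthogonal (K := M) w
    have hMorth : Mᗮ = LinearMap.ker (T : H →ₗ[ℂ] H) := Submodule.orthogonal_orthogonal _
    rw [hMorth] at hmem
    have : T (w - (orthogonalProjection M w : H)) = 0 := hmem
    rw [map_sub, sub_eq_zero] at this
    exact this
  ext w
  apply ext_inner_right ℂ
  intro z
  rw [ContinuousLinearMap.comp_apply, ContinuousLinearMap.comp_apply,
    ContinuousLinearMap.adjoint_inner_left]
  have hPz : (inner ℂ ((projOn M) (T w)) z : ℂ)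
      = inner ℂ (T w) ((orthogonalProjection M z : M) : H) := by
    show (inner ℂ ((orthogonalProjection M (T w) : M) : H) z : ℂ) = _
    exact Submodule.inner_starProjection_left_eq_right (K := M) (T w) z
  show (inner ℂ (T w) (T z) : ℂ) = inner ℂ ((projOn M) (T w)) z
  rw [hPz, hTP z, hTP w, key]
end

section
/- Let P and Q be orthogonal projections on a complex Hilbert space H and let T = PQ. Then the closure of the range of T intersects the kernel of T trivially: cl(R(T)) ∩ N(T) = {0}. -/
open ContinuousLinearMap Submodule LinearMap
open scoped InnerProductSpace

variable {H : Type*} [NormedAddCommGroup H] [InnerProductSpace ℂ H] [CompleteSpace H]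

theorem stmt4 (P Q T : H →L[ℂ] H) (hP : IsOrthoProj P) (hQ : IsOrthoProj Q)
    (hT : T = P ∘L Q) :
    (LinearMap.range (T : H →ₗ[ℂ] H)).topologicalClosure ⊓ LinearMap.ker (T : H →ₗ[ℂ] H) = ⊥ := by
  obtain ⟨hPP, hPa⟩ := hP
  obtain ⟨hQQ, hQa⟩ := hQ
  rw [eq_bot_iff]
  rintro x ⟨hx1, hx2⟩
  have hx2 : T x = 0 := hx2
  have hx1' : x ∈ closure ((LinearMap.range (T : H →ₗ[ℂ] H) : Submodule ℂ H) : Set H) := hx1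
  -- P fixes x
  have hPx : P x = x := by
    have hsub : ((LinearMap.range (T : H →ₗ[ℂ] H) : Submodule ℂ H) : Set H) ⊆ {z | P z = z} := by
      rintro _ ⟨y, rfl⟩
      show P (T y) = T y
      rw [hT]
      have := congrArg (fun S => S (Q y)) hPP
      simpa using this
    have hcl : IsClosed {z : H | P z = z} :=
      isClosed_eq P.continuous continuous_id
    exact closure_minimal hsub hcl hx1'
  -- Q x = 0
  have hQx : Q x = 0 := by
    have h1 : ⟪(Q x), (Q x)⟫_ℂ = (0 : ℂ) := by
      calc ⟪(Q x), (Q x)⟫_ℂ = ⟪((ContinuousLinearMap.adjoint Q) x), (Q x)⟫_ℂ := by rw [hQa]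
        _ = ⟪x, (Q (Q x))⟫_ℂ := ContinuousLinearMap.adjoint_inner_left Q (Q x) x
        _ = ⟪x, (Q x)⟫_ℂ := by
            have := congrArg (fun S => S x) hQQ
            simp only [ContinuousLinearMap.comp_apply] at this
            rw [this]
        _ = ⟪(P x), (Q x)⟫_ℂ := by rw [hPx]
        _ = ⟪((ContinuousLinearMap.adjoint P) x), (Q x)⟫_ℂ := by rw [hPa]
        _ = ⟪x, (P (Q x))⟫_ℂ := ContinuousLinearMap.adjoint_inner_left P (Q x) x
        _ = ⟪x, (T x)⟫_ℂ := by rw [hT]; rfl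
        _ = 0 := by rw [hx2, inner_zero_right]
    exact inner_self_eq_zero.mp h1
  -- x ⊥ range T
  have horth : ∀ z ∈ closure ((LinearMap.range (T : H →ₗ[ℂ] H) : Submodule ℂ H) : Set H),
      ⟪z, x⟫_ℂ = (0 : ℂ) := by
    intro z hz
    have hsub : ((LinearMap.range (T : H →ₗ[ℂ] H) : Submodule ℂ H) : Set H) ⊆ {w | ⟪w, x⟫_ℂ = (0 : ℂ)} := by
      rintro _ ⟨y, rfl⟩
      show ⟪(T y), x⟫_ℂ = (0 : ℂ)
      calc ⟪(T y), x⟫_ℂ = ⟪y, ((ContinuousLinearMap.adjoint T) x)⟫_ℂ :=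
            (ContinuousLinearMap.adjoint_inner_right T y x).symm
        _ = 0 := by
            rw [hT, ContinuousLinearMap.adjoint_comp, hPa, hQa]
            simp [hPx, hQx]
    have hcl : IsClosed {w : H | ⟪w, x⟫_ℂ = (0 : ℂ)} :=
      isClosed_eq (continuous_inner.comp (continuous_id.prodMk continuous_const)) continuous_const
    exact closure_minimal hsub hcl hz
  have : ⟪x, x⟫_ℂ = (0 : ℂ) := horth x hx1'
  simpa using inner_self_eq_zero.mp this
end

section
/- Let P and Q be orthogonal projections on a complex Hilbert space H and let T = PQ. Then the subspace cl(R(T)) + N(T) is dense in H. -/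
open ContinuousLinearMap Submodule LinearMap

variable {H : Type*} [NormedAddCommGroup H] [InnerProductSpace ℂ H] [CompleteSpace H]

theorem stmt5 (P Q T : H →L[ℂ] H) (hP : IsOrthoProj P) (hQ : IsOrthoProj Q)
    (hT : T = P ∘L Q) :
    Dense (((LinearMap.range (T : H →ₗ[ℂ] H)).topologicalClosure ⊔ LinearMap.ker (T : H →ₗ[ℂ] H) : Submodule ℂ H) : Set H) := by
  obtain ⟨hP2, hPa⟩ := hP
  obtain ⟨hQ2, hQa⟩ := hQ
  rw [Submodule.dense_iff_topologicalClosure_eq_top,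
    Submodule.topologicalClosure_eq_top_iff, eq_bot_iff]
  intro x hx
  rw [Submodule.mem_orthogonal] at hx
  have hrange : ∀ z : H, (inner ℂ (T z) x : ℂ) = 0 := fun z =>
    hx (T z) (le_sup_left (a := (LinearMap.range (T : H →ₗ[ℂ] H)).topologicalClosure)
      (Submodule.le_topologicalClosure _ ⟨z, rfl⟩))
  have hker : ∀ y : H, T y = 0 → (inner ℂ y x : ℂ) = 0 := fun y hy =>
    hx y (le_sup_right (b := LinearMap.ker (T : H →ₗ[ℂ] H)) hy)
  have hQQ : ∀ y : H, Q (Q y) = Q y := fun y => by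
    have := congrArg (fun S : H →L[ℂ] H => S y) hQ2
    simpa using this
  have hPP : ∀ y : H, P (P y) = P y := fun y => by
    have := congrArg (fun S : H →L[ℂ] H => S y) hP2
    simpa using this
  -- Step 1: Q x = x
  have hQx : Q x = x := by
    have hz : Q (x - Q x) = 0 := by simp [map_sub, hQQ]
    have hy : T (x - Q x) = 0 := by simp [hT, hz]
    have h1 : (inner ℂ (x - Q x) x : ℂ) = 0 := hker _ hy
    have h2 : (inner ℂ (x - Q x) (Q x) : ℂ) = 0 := by
      have h := ContinuousLinearMap.adjoint_inner_right Q (x - Q x) x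
      rw [hQa] at h
      rw [h, hz, inner_zero_left]
    have h3 : (inner ℂ (x - Q x) (x - Q x) : ℂ) = 0 := by
      rw [inner_sub_right, h1, h2, sub_zero]
    have h4 : x - Q x = 0 := inner_self_eq_zero.mp h3
    rw [← sub_eq_zero]; rw [← neg_sub, h4, neg_zero]
  -- Step 2: Q (P x) = 0
  have hQPx : Q (P x) = 0 := by
    have hTx : ContinuousLinearMap.adjoint T x = 0 := by
      have h3 : (inner ℂ (ContinuousLinearMap.adjoint T x)
          (ContinuousLinearMap.adjoint T x) : ℂ) = 0 := by
        rw [ContinuousLinearMap.adjoint_inner_left]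
        have := hrange (ContinuousLinearMap.adjoint T x)
        rw [← inner_conj_symm, this, map_zero]
      exact inner_self_eq_zero.mp h3
    have : ContinuousLinearMap.adjoint T = Q ∘L P := by
      rw [hT, ContinuousLinearMap.adjoint_comp, hPa, hQa]
    rw [this] at hTx
    simpa using hTx
  -- Step 3: P x = 0
  have hPx : P x = 0 := by
    have h1 : (inner ℂ (P x) (P x) : ℂ) = 0 := by
      have e1 : (inner ℂ (P x) (P x) : ℂ) = inner ℂ (P (P x)) x := by
        have h := ContinuousLinearMap.adjoint_inner_right P (P x) x
        rw [hPa] at h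
        rw [← h]
      rw [e1, hPP]
      have e2 : (inner ℂ (P x) x : ℂ) = inner ℂ (P x) (Q x) := by rw [hQx]
      rw [e2]
      have h := ContinuousLinearMap.adjoint_inner_right Q (P x) x
      rw [hQa] at h
      rw [h, hQPx, inner_zero_left]
    exact inner_self_eq_zero.mp h1
  -- Step 4: x ∈ ker T, hence x ⟂ x
  have hTx0 : T x = 0 := by
    rw [hT]
    simp only [ContinuousLinearMap.comp_apply]
    rw [hQx, hPx]
  have := hker x hTx0
  exact inner_self_eq_zero.mp this
end

section
/- Let P and Q be orthogonal projections on a complex Hilbert space H and let T = PQ. Then R(T) is closed if and only if cl(R(T)) + N(T) = H. -/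
open ContinuousLinearMap Submodule LinearMap
open scoped InnerProductSpace NNReal

variable {H : Type*} [NormedAddCommGroup H] [InnerProductSpace ℂ H] [CompleteSpace H]

lemma op_idem {P : H →L[ℂ] H} (hP : IsOrthoProj P) (x : H) : P (P x) = P x := by
  conv_rhs => rw [← hP.1]
  rfl

lemma op_fix {P : H →L[ℂ] H} (hP : IsOrthoProj P) {x : H} (hx : x ∈ LinearMap.range (P : H →ₗ[ℂ] H)) :
    P x = x := by
  obtain ⟨y, rfl⟩ := hx
  exact op_idem hP y

lemma op_inner {P : H →L[ℂ] H} (hP : IsOrthoProj P) (x y : H) :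
    ⟪P x, y⟫_ℂ = ⟪x, P y⟫_ℂ := by
  conv_lhs => rw [← hP.2]
  exact ContinuousLinearMap.adjoint_inner_left P y x

lemma op_ker_eq {P : H →L[ℂ] H} (hP : IsOrthoProj P) :
    LinearMap.ker (P : H →ₗ[ℂ] H) = (LinearMap.range (P : H →ₗ[ℂ] H))ᗮ := by
  ext x
  simp only [LinearMap.mem_ker, Submodule.mem_orthogonal]
  constructor
  · rintro h u ⟨y, rfl⟩
    simp only [ContinuousLinearMap.coe_coe] at h ⊢
    rw [op_inner hP, h, inner_zero_right]
  · intro h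
    have h1 : ⟪P x, x⟫_ℂ = 0 := h _ ⟨x, rfl⟩
    have h2 : ⟪P x, P x⟫_ℂ = 0 := by
      rw [← op_inner hP (P x) x, op_idem hP]
      exact h1
    exact inner_self_eq_zero.mp h2

lemma op_range_closed {P : H →L[ℂ] H} (hP : IsOrthoProj P) :
    IsClosed ((LinearMap.range (P : H →ₗ[ℂ] H) : Submodule ℂ H) : Set H) := by
  have h : ((LinearMap.range (P : H →ₗ[ℂ] H) : Submodule ℂ H) : Set H) = {x | P x = x} := by
    ext x
    constructor
    · intro hx; exact op_fix hP hx
    · intro hx; exact ⟨x, hx⟩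
  rw [h]
  exact isClosed_eq P.continuous continuous_id

lemma projOnc_fix {A : Submodule ℂ H} (hA : IsClosed (A : Set H)) {a : H} (ha : a ∈ A) :
    projOnc A hA a = a := by
  haveI : CompleteSpace A := hA.completeSpace_coe
  show (A.subtypeL.comp (orthogonalProjection A)) a = a
  simp [Submodule.starProjection_eq_self_iff.mpr ha]

lemma projOnc_mem {A : Submodule ℂ H} (hA : IsClosed (A : Set H)) (x : H) :
    projOnc A hA x ∈ A := by
  haveI : CompleteSpace A := hA.completeSpace_coe
  exact ((orthogonalProjection A) x).2

lemma projOnc_orth {A : Submodule ℂ H} (hA : IsClosed (A : Set H)) {b : H} (hb : b ∈ Aᗮ) :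
    projOnc A hA b = 0 := by
  haveI : CompleteSpace A := hA.completeSpace_coe
  show (A.subtypeL.comp (orthogonalProjection A)) b = 0
  simp [Submodule.orthogonalProjectionOnto_apply_of_mem_orthogonal hb]

lemma projOnc_sub_mem {A : Submodule ℂ H} (hA : IsClosed (A : Set H)) (x : H) :
    x - projOnc A hA x ∈ Aᗮ := by
  haveI : CompleteSpace A := hA.completeSpace_coe
  exact A.sub_starProjection_mem_orthogonal x

lemma orthoSup_closed {A B : Submodule ℂ H} (hA : IsClosed (A : Set H))
    (hB : IsClosed (B : Set H)) (horth : ∀ a ∈ A, ∀ b ∈ B, ⟪a, b⟫_ℂ = 0) :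
    IsClosed ((A ⊔ B : Submodule ℂ H) : Set H) := by
  have hBA : B ≤ Aᗮ := by
    intro b hb
    rw [Submodule.mem_orthogonal]
    intro a ha
    exact horth a ha b hb
  have key : ((A ⊔ B : Submodule ℂ H) : Set H)
      = (fun x => x - projOnc A hA x) ⁻¹' (B : Set H) := by
    ext x
    constructor
    · intro hx
      rw [SetLike.mem_coe, Submodule.mem_sup] at hx
      obtain ⟨a, ha, b, hb, rfl⟩ := hx
      have : (a + b) - projOnc A hA (a + b) = b := by
        rw [map_add, projOnc_fix hA ha, projOnc_orth hA (hBA hb)]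
        abel
      simp only [Set.mem_preimage, this]
      exact hb
    · intro hx
      have : x = projOnc A hA x + (x - projOnc A hA x) := by abel
      rw [SetLike.mem_coe, this]
      exact Submodule.add_mem_sup (projOnc_mem hA x) hx
  rw [key]
  exact hB.preimage (continuous_id.sub (projOnc A hA).continuous)

lemma projMap_closed_iff {P : H →L[ℂ] H} (hP : IsOrthoProj P) {V : Submodule ℂ H}
    (hV : IsClosed (V : Set H)) :
    IsClosed ((LinearMap.ker (P : H →ₗ[ℂ] H) ⊔ V : Submodule ℂ H) : Set H) ↔
      IsClosed ((V.map (P : H →ₗ[ℂ] H) : Submodule ℂ H) : Set H) := by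
  have hPvker : ∀ v : H, P v - v ∈ LinearMap.ker (P : H →ₗ[ℂ] H) := by
    intro v
    simp [LinearMap.mem_ker, map_sub, op_idem hP]
  constructor
  · intro h
    have heq : V.map (P : H →ₗ[ℂ] H) = (LinearMap.ker (P : H →ₗ[ℂ] H) ⊔ V) ⊓ LinearMap.range (P : H →ₗ[ℂ] H) := by
      apply le_antisymm
      · rintro _ ⟨v, hv, rfl⟩
        refine ⟨?_, ⟨v, rfl⟩⟩
        have h2 : P v = (P v - v) + v := by abel
        rw [ContinuousLinearMap.coe_coe, h2]
        exact Submodule.add_mem_sup (hPvker v) hv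
      · rintro x ⟨hx1, hx2⟩
        obtain ⟨u, hu, v, hv, rfl⟩ := Submodule.mem_sup.mp hx1
        have : P (u + v) = P v := by
          rw [map_add, show P u = 0 from LinearMap.mem_ker.mp hu, zero_add]
        rw [← op_fix hP hx2, this]
        exact ⟨v, hv, rfl⟩
    rw [heq, Submodule.coe_inf]
    exact h.inter (op_range_closed hP)
  · intro h
    have heq : LinearMap.ker (P : H →ₗ[ℂ] H) ⊔ V = (V.map (P : H →ₗ[ℂ] H)) ⊔ LinearMap.ker (P : H →ₗ[ℂ] H) := by
      apply le_antisymm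
      · refine sup_le le_sup_right ?_
        intro v hv
        have h2 : v = P v + (v - P v) := by abel
        rw [h2]
        refine Submodule.add_mem_sup ⟨v, hv, rfl⟩ ?_
        have h3 : v - P v = -(P v - v) := by abel
        rw [h3]
        exact neg_mem (hPvker v)
      · refine sup_le ?_ le_sup_left
        rintro _ ⟨v, hv, rfl⟩
        have h2 : P v = (P v - v) + v := by abel
        rw [ContinuousLinearMap.coe_coe, h2]
        exact Submodule.add_mem_sup (hPvker v) hv
    rw [heq]
    refine orthoSup_closed h (ContinuousLinearMap.isClosed_ker P) ?_
    rintro _ ⟨v, hv, rfl⟩ b hb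
    rw [ContinuousLinearMap.coe_coe, op_inner hP, show P b = 0 from LinearMap.mem_ker.mp hb, inner_zero_right]

lemma closed_range_adjoint {T : H →L[ℂ] H}
    (h : IsClosed ((LinearMap.range (T : H →ₗ[ℂ] H) : Submodule ℂ H) : Set H)) :
    IsClosed ((LinearMap.range ((ContinuousLinearMap.adjoint T : H →L[ℂ] H) : H →ₗ[ℂ] H) : Submodule ℂ H) : Set H) := by
  set R : Submodule ℂ H := LinearMap.range (T : H →ₗ[ℂ] H) with hR
  haveI : CompleteSpace R := h.completeSpace_coe
  set K : Submodule ℂ H := (LinearMap.ker (T : H →ₗ[ℂ] H))ᗮ with hK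
  haveI : CompleteSpace (LinearMap.ker (T : H →ₗ[ℂ] H)) := (ContinuousLinearMap.isClosed_ker T).completeSpace_coe
  set f : K →L[ℂ] R := (T.comp K.subtypeL).codRestrict R
    (fun x => LinearMap.mem_range_self _ _) with hf
  have hfapp : ∀ x : K, (f x : H) = T (x : H) := fun x => rfl
  have hinj : LinearMap.ker (f : K →ₗ[ℂ] R) = ⊥ := by
    rw [eq_bot_iff]
    rintro x hx
    have hTx : T (x : H) = 0 := by
      have := LinearMap.mem_ker.mp hx
      have := congrArg (Subtype.val) this
      simpa [hfapp] using this
    have hxker : (x : H) ∈ LinearMap.ker (T : H →ₗ[ℂ] H) := hTx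
    have : ⟪(x : H), (x : H)⟫_ℂ = 0 :=
      (Submodule.mem_orthogonal _ _).mp x.2 _ hxker
    have : (x : H) = 0 := inner_self_eq_zero.mp this
    simpa [Submodule.mem_bot] using Subtype.ext this
  have hsurj : LinearMap.range (f : K →ₗ[ℂ] R) = ⊤ := by
    rw [LinearMap.range_eq_top]
    rintro ⟨y, hy⟩
    obtain ⟨x, rfl⟩ := hy
    refine ⟨⟨x - (orthogonalProjection (LinearMap.ker (T : H →ₗ[ℂ] H)) x : H),
      (LinearMap.ker (T : H →ₗ[ℂ] H)).sub_starProjection_mem_orthogonal x⟩, ?_⟩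
    apply Subtype.ext
    have hker : T ((orthogonalProjection (LinearMap.ker (T : H →ₗ[ℂ] H)) x : H)) = 0 :=
      (orthogonalProjection (LinearMap.ker (T : H →ₗ[ℂ] H)) x).2
    show T (x - (orthogonalProjection (LinearMap.ker (T : H →ₗ[ℂ] H)) x : H)) = T x
    rw [map_sub, hker, sub_zero]
  let e := ContinuousLinearEquiv.ofBijective f hinj hsurj
  set g : R →L[ℂ] H := (ContinuousLinearMap.adjoint T).comp R.subtypeL with hg
  set C : ℝ≥0 := ‖(e.symm : R →L[ℂ] K)‖₊ + 1 with hC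
  have hbound : ∀ y : R, ‖y‖ ≤ (C : ℝ) * ‖g y‖ := by
    intro y
    set x : K := e.symm y with hx
    have hTxy : T (x : H) = (y : H) := by
      have h1 : e x = y := e.apply_symm_apply y
      have h2 : f x = y := by
        rw [← h1]
        rfl
      rw [← hfapp]
      exact congrArg Subtype.val h2
    have hxnorm : ‖x‖ ≤ (C : ℝ) * ‖y‖ := by
      calc ‖x‖ = ‖(e.symm : R →L[ℂ] K) y‖ := rfl
        _ ≤ ‖(e.symm : R →L[ℂ] K)‖ * ‖y‖ := (e.symm : R →L[ℂ] K).le_opNorm y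
        _ ≤ (C : ℝ) * ‖y‖ := by
            apply mul_le_mul_of_nonneg_right _ (norm_nonneg y)
            simp only [hC, NNReal.coe_add, NNReal.coe_one, coe_nnnorm]
            linarith
    have hsq : ‖(y : H)‖ ^ 2 ≤ ‖x‖ * ‖g y‖ := by
      have h2 : ⟪(x : H), g y⟫_ℂ = ((‖(y : H)‖ : ℂ)) ^ 2 := by
        rw [hg]
        show ⟪(x : H), (ContinuousLinearMap.adjoint T) (y : H)⟫_ℂ = _
        rw [ContinuousLinearMap.adjoint_inner_right, hTxy]
        exact inner_self_eq_norm_sq_to_K (y : H)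
      have h3 : ‖⟪(x : H), g y⟫_ℂ‖ ≤ ‖(x : H)‖ * ‖g y‖ := norm_inner_le_norm _ _
      rw [h2] at h3
      calc ‖(y : H)‖ ^ 2 = ‖((‖(y : H)‖ : ℂ)) ^ 2‖ := by simp [norm_pow]
        _ ≤ ‖(x : H)‖ * ‖g y‖ := h3
        _ = ‖x‖ * ‖g y‖ := rfl
    rcases eq_or_lt_of_le (norm_nonneg (y : H)) with hy0 | hy0
    · rw [show ‖y‖ = ‖(y : H)‖ from rfl, ← hy0]
      positivity
    · have hyn : ‖y‖ = ‖(y : H)‖ := rfl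
      have h3 : ‖(y : H)‖ * ‖(y : H)‖ ≤ ((C : ℝ) * ‖g y‖) * ‖(y : H)‖ := by
        calc ‖(y : H)‖ * ‖(y : H)‖ = ‖(y : H)‖ ^ 2 := (sq ‖(y : H)‖).symm
          _ ≤ ‖x‖ * ‖g y‖ := hsq
          _ ≤ ((C : ℝ) * ‖y‖) * ‖g y‖ :=
              mul_le_mul_of_nonneg_right hxnorm (norm_nonneg _)
          _ = ((C : ℝ) * ‖g y‖) * ‖(y : H)‖ := by rw [hyn]; ring
      rw [hyn]
      exact le_of_mul_le_mul_right h3 hy0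
  have hanti := g.antilipschitz_of_bound hbound
  have hclg : IsClosed (Set.range g) := hanti.isClosed_range g.uniformContinuous
  have hTorth : ∀ u ∈ Rᗮ, (ContinuousLinearMap.adjoint T) u = 0 := by
    intro u hu
    apply ext_inner_right ℂ
    intro v
    rw [ContinuousLinearMap.adjoint_inner_left, inner_zero_left]
    have : ⟪T v, u⟫_ℂ = 0 := (Submodule.mem_orthogonal _ _).mp hu _ ⟨v, rfl⟩
    rw [← inner_conj_symm, this, map_zero]
  have hseteq : ((LinearMap.range ((ContinuousLinearMap.adjoint T : H →L[ℂ] H) : H →ₗ[ℂ] H) : Submodule ℂ H) : Set H)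
      = Set.range g := by
    ext z
    constructor
    · rintro ⟨w, rfl⟩
      refine ⟨orthogonalProjection R w, ?_⟩
      have hw : w - (orthogonalProjection R w : H) ∈ Rᗮ :=
        R.sub_starProjection_mem_orthogonal w
      have h0 : (ContinuousLinearMap.adjoint T) (w - (orthogonalProjection R w : H)) = 0 :=
        hTorth _ hw
      show (ContinuousLinearMap.adjoint T) ((orthogonalProjection R w : H)) =
        (ContinuousLinearMap.adjoint T) w
      rw [map_sub, sub_eq_zero] at h0
      exact h0.symm
    · rintro ⟨w, rfl⟩
      exact ⟨(w : H), rfl⟩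
  rw [hseteq]
  exact hclg

lemma range_comp' (A B : H →L[ℂ] H) :
    LinearMap.range ((A ∘L B : H →L[ℂ] H) : H →ₗ[ℂ] H) = (LinearMap.range (B : H →ₗ[ℂ] H)).map (A : H →ₗ[ℂ] H) := by
  ext x
  constructor
  · rintro ⟨y, rfl⟩
    exact ⟨B y, ⟨y, rfl⟩, rfl⟩
  · rintro ⟨_, ⟨y, rfl⟩, rfl⟩
    exact ⟨y, rfl⟩

theorem stmt6 (P Q T : H →L[ℂ] H) (hP : IsOrthoProj P) (hQ : IsOrthoProj Q)
    (hT : T = P ∘L Q) :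
    IsClosed ((LinearMap.range (T : H →ₗ[ℂ] H) : Submodule ℂ H) : Set H) ↔
      (LinearMap.range (T : H →ₗ[ℂ] H)).topologicalClosure ⊔ LinearMap.ker (T : H →ₗ[ℂ] H) = ⊤ := by
  set M : Submodule ℂ H := LinearMap.range (P : H →ₗ[ℂ] H) with hM
  set N : Submodule ℂ H := LinearMap.range (Q : H →ₗ[ℂ] H) with hN
  have hMc : IsClosed (M : Set H) := op_range_closed hP
  have hNc : IsClosed (N : Set H) := op_range_closed hQ
  have hkerP : LinearMap.ker (P : H →ₗ[ℂ] H) = Mᗮ := op_ker_eq hP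
  have hkerQ : LinearMap.ker (Q : H →ₗ[ℂ] H) = Nᗮ := op_ker_eq hQ
  have hRTle : LinearMap.range (T : H →ₗ[ℂ] H) ≤ M := by
    rw [hT, range_comp']
    rintro _ ⟨y, hy, rfl⟩
    exact ⟨y, rfl⟩
  have hKT : LinearMap.ker (T : H →ₗ[ℂ] H) = Nᗮ ⊔ (N ⊓ Mᗮ) := by
    apply le_antisymm
    · intro x hx
      have hTx : P (Q x) = 0 := by
        have := LinearMap.mem_ker.mp hx
        rw [hT] at this
        exact this
      have h1 : x - Q x ∈ Nᗮ := by
        rw [← hkerQ]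
        simp [LinearMap.mem_ker, map_sub, op_idem hQ]
      have h2 : Q x ∈ N ⊓ Mᗮ := ⟨⟨x, rfl⟩, by rw [← hkerP]; exact hTx⟩
      have h3 : x = (x - Q x) + Q x := by abel
      rw [h3]
      exact Submodule.add_mem_sup h1 h2
    · apply sup_le
      · intro x hx
        rw [← hkerQ] at hx
        rw [LinearMap.mem_ker, hT]
        show P (Q x) = 0
        rw [show Q x = 0 from LinearMap.mem_ker.mp hx, map_zero]
      · rintro x ⟨hxN, hxM⟩
        rw [LinearMap.mem_ker, hT]
        show P (Q x) = 0
        rw [op_fix hQ hxN]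
        rw [← hkerP] at hxM
        exact LinearMap.mem_ker.mp hxM
  have hTadj : ContinuousLinearMap.adjoint T = Q ∘L P := by
    rw [hT, ContinuousLinearMap.adjoint_comp, hP.2, hQ.2]
  have hRTadj : LinearMap.range ((ContinuousLinearMap.adjoint T : H →L[ℂ] H) : H →ₗ[ℂ] H) = M.map (Q : H →ₗ[ℂ] H) := by
    rw [hTadj, range_comp']
  constructor
  · intro hcl
    have h1 : IsClosed ((M.map (Q : H →ₗ[ℂ] H) : Submodule ℂ H) : Set H) := by
      rw [← hRTadj]
      exact closed_range_adjoint hcl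
    have h2 : IsClosed ((LinearMap.ker (Q : H →ₗ[ℂ] H) ⊔ M : Submodule ℂ H) : Set H) :=
      (projMap_closed_iff hQ hMc).mpr h1
    rw [hkerQ] at h2
    have hS_closed : IsClosed (((Nᗮ ⊔ M) ⊔ (N ⊓ Mᗮ) : Submodule ℂ H) : Set H) := by
      refine orthoSup_closed h2 ?_ ?_
      · rw [Submodule.coe_inf]
        exact hNc.inter (Submodule.isClosed_orthogonal M)
      · intro a ha b hb
        obtain ⟨n', hn', m, hm, rfl⟩ := Submodule.mem_sup.mp ha
        rw [inner_add_left]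
        rw [(Submodule.mem_orthogonal' _ _).mp hn' b hb.1,
          (Submodule.mem_orthogonal _ _).mp hb.2 m hm, add_zero]
    have hS_top : ((Nᗮ ⊔ M) ⊔ (N ⊓ Mᗮ) : Submodule ℂ H) = ⊤ := by
      haveI : CompleteSpace (((Nᗮ ⊔ M) ⊔ (N ⊓ Mᗮ) : Submodule ℂ H)) :=
        hS_closed.completeSpace_coe
      haveI : CompleteSpace N := hNc.completeSpace_coe
      rw [← Submodule.orthogonal_eq_bot_iff, eq_bot_iff]
      intro x hx
      have hxM : x ∈ Mᗮ :=
        Submodule.orthogonal_le (le_trans le_sup_right le_sup_left) hx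
      have hxN : x ∈ N := by
        have h4 : x ∈ Nᗮᗮ :=
          Submodule.orthogonal_le (le_trans le_sup_left le_sup_left) hx
        rwa [N.orthogonal_orthogonal] at h4
      have h5 : ⟪x, x⟫_ℂ = 0 :=
        (Submodule.mem_orthogonal _ _).mp (Submodule.orthogonal_le le_sup_right hx) x (Submodule.mem_inf.mpr ⟨hxN, hxM⟩)
      simp [inner_self_eq_zero.mp h5]
    have hMle : M ≤ LinearMap.range (T : H →ₗ[ℂ] H) ⊔ LinearMap.ker (T : H →ₗ[ℂ] H) := by
      intro m hm
      set r := m - projOnc (LinearMap.range (T : H →ₗ[ℂ] H)) hcl m with hr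
      have hrRT : ∀ t ∈ LinearMap.range (T : H →ₗ[ℂ] H), ⟪t, r⟫_ℂ = 0 := fun t ht =>
        (Submodule.mem_orthogonal _ _).mp (projOnc_sub_mem hcl m) t ht
      have hrM : r ∈ M := Submodule.sub_mem _ hm (hRTle (projOnc_mem hcl m))
      have hrN : r ∈ Nᗮ := by
        rw [Submodule.mem_orthogonal]
        intro n hn
        obtain ⟨w, rfl⟩ := hn
        have hPr : P r = r := op_fix hP hrM
        calc ⟪Q w, r⟫_ℂ = ⟪Q w, P r⟫_ℂ := by rw [hPr]
          _ = ⟪P (Q w), r⟫_ℂ := (op_inner hP (Q w) r).symm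
          _ = 0 := hrRT _ ⟨w, by rw [hT]; rfl⟩
      have hrker : r ∈ LinearMap.ker (T : H →ₗ[ℂ] H) := by
        rw [hKT]
        exact Submodule.mem_sup_left hrN
      have hmeq : m = projOnc (LinearMap.range (T : H →ₗ[ℂ] H)) hcl m + r := by rw [hr]; abel
      rw [hmeq]
      exact Submodule.add_mem_sup (projOnc_mem hcl m) hrker
    have htop : LinearMap.range (T : H →ₗ[ℂ] H) ⊔ LinearMap.ker (T : H →ₗ[ℂ] H) = ⊤ := by
      rw [eq_top_iff, ← hS_top]
      refine sup_le (sup_le ?_ hMle) ?_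
      · intro x hx
        exact Submodule.mem_sup_right (by rw [hKT]; exact Submodule.mem_sup_left hx)
      · intro x hx
        exact Submodule.mem_sup_right (by rw [hKT]; exact Submodule.mem_sup_right hx)
    rw [eq_top_iff, ← htop]
    exact sup_le (le_trans (Submodule.le_topologicalClosure _) le_sup_left) le_sup_right
  · intro h
    have hclM : (LinearMap.range (T : H →ₗ[ℂ] H)).topologicalClosure ≤ M :=
      Submodule.topologicalClosure_minimal _ hRTle hMc
    have hS_top : (M ⊔ Nᗮ) ⊔ (N ⊓ Mᗮ) = ⊤ := by
      rw [eq_top_iff, ← h]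
      apply sup_le
      · exact le_trans hclM (le_trans le_sup_left le_sup_left)
      · rw [hKT]
        apply sup_le
        · exact le_trans le_sup_right le_sup_left
        · exact le_sup_right
    have hWle : M ⊔ Nᗮ ≤ (N ⊓ Mᗮ)ᗮ := by
      apply sup_le
      · intro m hm
        rw [Submodule.mem_orthogonal' _ _]
        rintro b ⟨hbN, hbM⟩
        exact (Submodule.mem_orthogonal _ _).mp hbM m hm
      · intro n' hn'
        rw [Submodule.mem_orthogonal' _ _]
        rintro b ⟨hbN, hbM⟩
        exact (Submodule.mem_orthogonal' _ _).mp hn' b hbN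
    have hW : M ⊔ Nᗮ = (N ⊓ Mᗮ)ᗮ := by
      apply le_antisymm hWle
      intro x hx
      have hx2 : x ∈ (M ⊔ Nᗮ) ⊔ (N ⊓ Mᗮ) := by rw [hS_top]; trivial
      obtain ⟨w, hw, z, hz, rfl⟩ := Submodule.mem_sup.mp hx2
      have h0 : ⟪z, w⟫_ℂ + ⟪z, z⟫_ℂ = 0 := by
        rw [← inner_add_right]
        exact (Submodule.mem_orthogonal _ _).mp hx z hz
      have h1 : ⟪z, w⟫_ℂ = 0 := (Submodule.mem_orthogonal _ _).mp (hWle hw) z hz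
      have hz0 : z = 0 := by
        rw [h1, zero_add] at h0
        exact inner_self_eq_zero.mp h0
      rw [hz0, add_zero]
      exact hw
    have hWclosed : IsClosed ((M ⊔ Nᗮ : Submodule ℂ H) : Set H) := by
      rw [hW]
      exact Submodule.isClosed_orthogonal _
    have h1 : IsClosed ((M.map (Q : H →ₗ[ℂ] H) : Submodule ℂ H) : Set H) := by
      apply (projMap_closed_iff hQ hMc).mp
      rw [hkerQ, sup_comm Nᗮ M]
      exact hWclosed
    have h2 : IsClosed
        ((LinearMap.range ((ContinuousLinearMap.adjoint T : H →L[ℂ] H) : H →ₗ[ℂ] H) : Submodule ℂ H) : Set H) := by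
      rw [hRTadj]
      exact h1
    have h3 := closed_range_adjoint h2
    rwa [ContinuousLinearMap.adjoint_adjoint] at h3
end

section
/- Let T be a product of two orthogonal projections on a complex Hilbert space H. Then T = P_M P_N for closed subspaces M, N if and only if there exist closed subspaces M₁, N₁ with M = cl(R(T)) ⊕ M₁ (orthogonal direct sum), N = N(T)^⊥ ⊕ N₁, M₁ ⊥ N₁, and M₁ ⊕ N₁ ⊆ R(T)^⊥ ∩ N(T). -/
set_option linter.unusedSectionVars false


open ContinuousLinearMap Submodule LinearMap

variable {H : Type*} [NormedAddCommGroup H] [InnerProductSpace ℂ H] [CompleteSpace H]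

local notation "⟪" x ", " y "⟫" => @inner ℂ _ _ x y

lemma projOn_apply (K : Submodule ℂ H) [CompleteSpace K] (x : H) :
    projOn K x = (orthogonalProjection K x : H) := rfl

lemma projOn_apply_mem (K : Submodule ℂ H) [CompleteSpace K] (x : H) : projOn K x ∈ K :=
  (orthogonalProjection K x).2

lemma projOn_eq_self {K : Submodule ℂ H} [CompleteSpace K] {x : H} (hx : x ∈ K) :
    projOn K x = x :=
  Submodule.starProjection_eq_self_iff.2 hx

lemma projOn_eq_zero {K : Submodule ℂ H} [CompleteSpace K] {x : H} (hx : x ∈ Kᗮ) :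
    projOn K x = 0 := by
  rw [projOn_apply, Submodule.orthogonalProjectionOnto_apply_of_mem_orthogonal hx]
  rfl

/-- Projection onto an orthogonal sum is the sum of the projections. -/
lemma projOn_sup (A B : Submodule ℂ H) [CompleteSpace A] [CompleteSpace B]
    [CompleteSpace (A ⊔ B : Submodule ℂ H)] (hAB : B ≤ Aᗮ) (x : H) :
    projOn (A ⊔ B) x = projOn A x + projOn B x := by
  have hBA : A ≤ Bᗮ := (Submodule.IsOrtho.symm hAB : Submodule.IsOrtho A B)
  have hm : projOn A x + projOn B x ∈ A ⊔ B :=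
    Submodule.add_mem_sup (projOn_apply_mem A x) (projOn_apply_mem B x)
  have horth : x - (projOn A x + projOn B x) ∈ (A ⊔ B)ᗮ := by
    rw [← Submodule.inf_orthogonal]
    constructor
    · have h1 : x - projOn A x ∈ Aᗮ := Submodule.sub_starProjection_mem_orthogonal x
      have h2 : projOn B x ∈ Aᗮ := hAB (projOn_apply_mem B x)
      have := Aᗮ.sub_mem h1 h2
      simpa [sub_sub] using this
    · have h1 : x - projOn B x ∈ Bᗮ := Submodule.sub_starProjection_mem_orthogonal x
      have h2 : projOn A x ∈ Bᗮ := hBA (projOn_apply_mem A x)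
      have := Bᗮ.sub_mem h1 h2
      have h3 : x - projOn B x - projOn A x = x - (projOn A x + projOn B x) := by abel
      rwa [h3] at this
  exact Submodule.eq_starProjection_of_mem_orthogonal hm horth

lemma IsOrthoProj.fix_of_mem_ker_orth {Q : H →L[ℂ] H} (hQ : IsOrthoProj Q) {x : H}
    (hx : x ∈ (LinearMap.ker (Q : H →ₗ[ℂ] H))ᗮ) : Q x = x := by
  have hker : x - Q x ∈ LinearMap.ker (Q : H →ₗ[ℂ] H) := by
    rw [LinearMap.mem_ker]
    have := congrArg (fun S => S x) hQ.1
    simp only [ContinuousLinearMap.comp_apply] at this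
    simp [map_sub, this]
  have h1 : ⟪x - Q x, x⟫ = 0 := (Submodule.mem_orthogonal _ _).1 hx _ hker
  have h2 : ⟪x - Q x, Q x⟫ = 0 := by
    have := ContinuousLinearMap.adjoint_inner_left Q x (x - Q x)
    rw [hQ.2] at this
    rw [← this]
    rw [show Q (x - Q x) = 0 from hker]
    simp
  have : ⟪x - Q x, x - Q x⟫ = 0 := by
    rw [inner_sub_right, h1, h2, sub_zero]
  exact (sub_eq_zero.1 (inner_self_eq_zero.1 this)).symm

set_option synthInstance.maxHeartbeats 1000000 in
lemma orth_range_closure (T : H →L[ℂ] H) :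
    ((LinearMap.range (T : H →ₗ[ℂ] H)).topologicalClosure)ᗮ = (LinearMap.range (T : H →ₗ[ℂ] H))ᗮ := by
  haveI : CompleteSpace ((LinearMap.range (T : H →ₗ[ℂ] H))ᗮ : Submodule ℂ H) :=
    (LinearMap.range (T : H →ₗ[ℂ] H)).isClosed_orthogonal.completeSpace_coe
  rw [← Submodule.orthogonal_orthogonal_eq_closure]
  exact Submodule.orthogonal_orthogonal _

lemma mem_orth_range_of_adjoint_eq_zero {T : H →L[ℂ] H} {x : H}
    (h : ContinuousLinearMap.adjoint T x = 0) : x ∈ (LinearMap.range (T : H →ₗ[ℂ] H))ᗮ := by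
  rintro _ ⟨y, rfl⟩
  rw [inner_eq_zero_symm, ContinuousLinearMap.coe_coe, ← ContinuousLinearMap.adjoint_inner_left, h, inner_zero_left]

lemma adjoint_eq_zero_of_mem_orth_range {T : H →L[ℂ] H} {x : H}
    (h : x ∈ (LinearMap.range (T : H →ₗ[ℂ] H))ᗮ) : ContinuousLinearMap.adjoint T x = 0 := by
  have : ⟪ContinuousLinearMap.adjoint T x, ContinuousLinearMap.adjoint T x⟫ = 0 := by
    rw [ContinuousLinearMap.adjoint_inner_left]
    rw [inner_eq_zero_symm]
    exact h _ ⟨_, rfl⟩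
  exact inner_self_eq_zero.1 this

/-- Key lemma: if `T` is a product of orthogonal projections, then on `(ker T)ᗮ`
the projection onto `cl(range T)` agrees with `T`. -/
lemma key_proj (T : H →L[ℂ] H)
    (hX : ∃ P Q : H →L[ℂ] H, IsOrthoProj P ∧ IsOrthoProj Q ∧ T = P ∘L Q)
    [CompleteSpace ((LinearMap.range (T : H →ₗ[ℂ] H)).topologicalClosure : Submodule ℂ H)]
    {x : H} (hx : x ∈ (LinearMap.ker (T : H →ₗ[ℂ] H))ᗮ) :
    projOn (LinearMap.range (T : H →ₗ[ℂ] H)).topologicalClosure x = T x := by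
  obtain ⟨P, Q, hP, hQ, hT⟩ := hX
  -- Q x = x since x ∈ (ker T)ᗮ ⊆ (ker Q)ᗮ
  have hkerQ : LinearMap.ker (Q : H →ₗ[ℂ] H) ≤ LinearMap.ker (T : H →ₗ[ℂ] H) := by
    intro y hy
    rw [LinearMap.mem_ker, ContinuousLinearMap.coe_coe] at hy ⊢
    rw [hT]
    simp [ContinuousLinearMap.comp_apply, hy]
  have hxQ : x ∈ (LinearMap.ker (Q : H →ₗ[ℂ] H))ᗮ := Submodule.orthogonal_le hkerQ hx
  have hQx : Q x = x := hQ.fix_of_mem_ker_orth hxQ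
  -- T* x = T* T x
  have hadj : ContinuousLinearMap.adjoint T = Q ∘L P := by
    rw [hT, ContinuousLinearMap.adjoint_comp, hP.2, hQ.2]
  have hTTx : ContinuousLinearMap.adjoint T (x - T x) = 0 := by
    rw [map_sub, hadj]
    have h1 : (Q ∘L P) x = Q (P x) := rfl
    have h2 : (Q ∘L P) (T x) = Q (P (P (Q x))) := by rw [hT]; rfl
    have h3 : P (P (Q x)) = P (Q x) := by
      have := congrArg (fun S => S (Q x)) hP.1
      simpa using this
    rw [h1, h2, h3, hQx, sub_self]
  have horth : x - T x ∈ ((LinearMap.range (T : H →ₗ[ℂ] H)).topologicalClosure)ᗮ := by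
    rw [orth_range_closure]
    exact mem_orth_range_of_adjoint_eq_zero hTTx
  have hmem : T x ∈ (LinearMap.range (T : H →ₗ[ℂ] H)).topologicalClosure :=
    (LinearMap.range (T : H →ₗ[ℂ] H)).le_topologicalClosure ⟨x, rfl⟩
  exact Submodule.eq_starProjection_of_mem_orthogonal hmem horth

theorem stmt9 (T : H →L[ℂ] H)
    (hX : ∃ P Q : H →L[ℂ] H, IsOrthoProj P ∧ IsOrthoProj Q ∧ T = P ∘L Q)
    (M N : Submodule ℂ H) [CompleteSpace M] [CompleteSpace N] :
    T = projOn M ∘L projOn N ↔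
      ∃ M₁ N₁ : Submodule ℂ H,
        IsClosed (M₁ : Set H) ∧ IsClosed (N₁ : Set H) ∧
        M₁ ≤ ((LinearMap.range (T : H →ₗ[ℂ] H)).topologicalClosure)ᗮ ∧
        M = (LinearMap.range (T : H →ₗ[ℂ] H)).topologicalClosure ⊔ M₁ ∧
        N₁ ≤ LinearMap.ker (T : H →ₗ[ℂ] H) ∧
        N = (LinearMap.ker (T : H →ₗ[ℂ] H))ᗮ ⊔ N₁ ∧
        M₁ ≤ N₁ᗮ ∧
        M₁ ⊔ N₁ ≤ (LinearMap.range (T : H →ₗ[ℂ] H))ᗮ ⊓ LinearMap.ker (T : H →ₗ[ℂ] H) := by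
  set R' := (LinearMap.range (T : H →ₗ[ℂ] H)).topologicalClosure with hR'def
  set K := LinearMap.ker (T : H →ₗ[ℂ] H) with hKdef
  haveI : CompleteSpace R' := (LinearMap.range (T : H →ₗ[ℂ] H)).isClosed_topologicalClosure.completeSpace_coe
  have hKclosed : IsClosed (K : Set H) := isClosed_ker T
  haveI : CompleteSpace K := hKclosed.completeSpace_coe
  haveI : CompleteSpace (Kᗮ : Submodule ℂ H) := K.isClosed_orthogonal.completeSpace_coe
  have hadjProj : ∀ (U : Submodule ℂ H) [CompleteSpace U],
      ContinuousLinearMap.adjoint (projOn U) = projOn U := fun U _ =>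
    ContinuousLinearMap.isSelfAdjoint_iff'.1 (isSelfAdjoint_starProjection U)
  constructor
  · intro h
    have hMc : IsClosed (M : Set H) :=
      (completeSpace_coe_iff_isComplete.1 ‹CompleteSpace M›).isClosed
    have hrange : LinearMap.range (T : H →ₗ[ℂ] H) ≤ M := by
      rintro _ ⟨x, rfl⟩
      rw [h]
      exact projOn_apply_mem M _
    have hRM : R' ≤ M := Submodule.topologicalClosure_minimal (s := LinearMap.range (T : H →ₗ[ℂ] H)) hrange hMc
    have hNK : Nᗮ ≤ K := by
      intro x hx
      rw [hKdef, LinearMap.mem_ker, h]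
      simp [ContinuousLinearMap.comp_apply, projOn_eq_zero hx]
    have hKN : Kᗮ ≤ N := by
      have h1 := Submodule.orthogonal_le hNK
      rwa [Submodule.orthogonal_orthogonal N] at h1
    have hadjT : ContinuousLinearMap.adjoint T = projOn N ∘L projOn M := by
      rw [h, ContinuousLinearMap.adjoint_comp, hadjProj M, hadjProj N]
    -- elements of `R'ᗮ ⊓ M` are in the kernel of `T`
    have hM1ker : R'ᗮ ⊓ M ≤ K := by
      rintro x ⟨hx1, hx2⟩
      have hxr : x ∈ (LinearMap.range (T : H →ₗ[ℂ] H))ᗮ := by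
        rw [← orth_range_closure T]; exact hx1
      have hadj0 : ContinuousLinearMap.adjoint T x = 0 :=
        adjoint_eq_zero_of_mem_orth_range hxr
      have hNx : projOn N x = 0 := by
        have h1 : ContinuousLinearMap.adjoint T x = projOn N (projOn M x) := by
          rw [hadjT]; rfl
        rw [hadj0, projOn_eq_self hx2] at h1
        exact h1.symm
      rw [hKdef, LinearMap.mem_ker, h]
      simp [ContinuousLinearMap.comp_apply, hNx]
    -- elements of `K ⊓ N` are orthogonal to `M`
    have hNMperp : K ⊓ N ≤ Mᗮ := by
      rintro y ⟨hy1, hy2⟩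
      have hTy : projOn M (projOn N y) = 0 := by
        have := (LinearMap.mem_ker).1 hy1
        rw [h] at this
        exact this
      rw [projOn_eq_self hy2] at hTy
      have : orthogonalProjection M y = 0 := Submodule.coe_eq_zero.1 hTy
      exact Submodule.orthogonalProjectionOnto_eq_zero_iff.1 this
    refine ⟨R'ᗮ ⊓ M, K ⊓ N, ?_, ?_, inf_le_left, ?_, inf_le_left, ?_, ?_, ?_⟩
    · rw [Submodule.coe_inf]
      exact R'.isClosed_orthogonal.inter hMc
    · rw [Submodule.coe_inf]
      exact hKclosed.inter
        ((completeSpace_coe_iff_isComplete.1 ‹CompleteSpace N›).isClosed)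
    · exact (Submodule.sup_orthogonal_inf_of_hasOrthogonalProjection hRM).symm
    · have h1 := Submodule.sup_orthogonal_inf_of_hasOrthogonalProjection hKN
      rw [Submodule.orthogonal_orthogonal K] at h1
      exact h1.symm
    · intro x hx
      rw [Submodule.mem_orthogonal]
      intro y hy
      have hyM := hNMperp hy
      exact (Submodule.mem_orthogonal' M y).1 hyM x hx.2
    · refine sup_le (le_inf ?_ hM1ker) (le_inf ?_ inf_le_left)
      · intro x hx
        rw [← orth_range_closure T]
        exact hx.1
      · exact le_trans hNMperp (Submodule.orthogonal_le hrange)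
  · rintro ⟨M₁, N₁, hM₁c, hN₁c, hM₁orth, hM, hN₁ker, hN, hMN, hsub⟩
    haveI : CompleteSpace M₁ := hM₁c.completeSpace_coe
    haveI : CompleteSpace N₁ := hN₁c.completeSpace_coe
    have hM₁K : M₁ ≤ K := le_trans (le_trans le_sup_left hsub) inf_le_right
    have hN₁R : N₁ ≤ (LinearMap.range (T : H →ₗ[ℂ] H))ᗮ := le_trans (le_trans le_sup_right hsub) inf_le_left
    subst hM
    subst hN
    ext x
    rw [ContinuousLinearMap.comp_apply,
      projOn_sup _ _ (le_trans hN₁ker (Submodule.le_orthogonal_orthogonal K)) x, map_add,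
      projOn_sup _ _ hM₁orth _, projOn_sup _ _ hM₁orth _]
    have h1 : projOn M₁ (projOn Kᗮ x) = 0 :=
      projOn_eq_zero (Submodule.orthogonal_le hM₁K (projOn_apply_mem _ x))
    have h2 : projOn R' (projOn N₁ x) = 0 := by
      apply projOn_eq_zero
      rw [hR'def, orth_range_closure T]
      exact hN₁R (projOn_apply_mem _ x)
    have h3 : projOn M₁ (projOn N₁ x) = 0 :=
      projOn_eq_zero ((Submodule.IsOrtho.symm hMN : N₁ ≤ M₁ᗮ) (projOn_apply_mem _ x))
    have h4 : projOn R' (projOn Kᗮ x) = T (projOn Kᗮ x) :=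
      key_proj T hX (projOn_apply_mem Kᗮ x)
    have h5 : T (projOn Kᗮ x) = T x := by
      have hmem : x - projOn Kᗮ x ∈ K := by
        have := Submodule.sub_starProjection_mem_orthogonal (K := Kᗮ) x
        rwa [Submodule.orthogonal_orthogonal K] at this
      have h0 : T (x - projOn Kᗮ x) = 0 := hmem
      rw [map_sub, sub_eq_zero] at h0
      exact h0.symm
    rw [h1, h2, h3, h4, h5]
    abel
end

section
/- Let P be an orthogonal projection and A a positive operator with 0 ≤ A ≤ P on a Hilbert space H. Then the closures of the ranges of P − A, P − A², and P − A^{1/2} all coincide. -/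
open ContinuousLinearMap Submodule LinearMap

variable {H : Type*} [NormedAddCommGroup H] [InnerProductSpace ℂ H] [CompleteSpace H]

/-- If `C` is positive and `C² y = y`, then `C y = y`. -/
lemma sq_fix_aux {C : H →L[ℂ] H} (hC : C.IsPositive) {y : H} (h : C (C y) = y) :
    C y = y := by
  set z := C y - y with hz
  have hCz : C z = -z := by
    simp [hz, map_sub, h, neg_sub]
  have hpos : 0 ≤ RCLike.re (inner ℂ (C z) z) := hC.2 z
  rw [hCz, inner_neg_left, map_neg, inner_self_eq_norm_sq] at hpos
  have hz0 : z = 0 := by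
    have : ‖z‖ = 0 := by nlinarith [sq_nonneg ‖z‖]
    exact norm_eq_zero.mp this
  exact sub_eq_zero.mp (hz ▸ hz0)

lemma ortho_range_eq_ker_aux (T : H →L[ℂ] H)
    (hT : ContinuousLinearMap.adjoint T = T) :
    (LinearMap.range (T : H →ₗ[ℂ] H))ᗮ = LinearMap.ker (T : H →ₗ[ℂ] H) := by
  ext x
  simp only [Submodule.mem_orthogonal, LinearMap.mem_range, LinearMap.mem_ker,
    forall_exists_index]
  constructor
  · intro h
    have h1 := h (T (T x)) (T x) rfl
    rw [← hT, ContinuousLinearMap.adjoint_inner_left, hT] at h1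
    exact inner_self_eq_zero.mp h1
  · rintro h u y rfl
    simp only [ContinuousLinearMap.coe_coe] at h ⊢
    rw [← hT, ContinuousLinearMap.adjoint_inner_left, h, inner_zero_right]

lemma closure_range_eq_aux (T : H →L[ℂ] H)
    (hT : ContinuousLinearMap.adjoint T = T) :
    (LinearMap.range (T : H →ₗ[ℂ] H)).topologicalClosure = (LinearMap.ker (T : H →ₗ[ℂ] H))ᗮ := by
  rw [← Submodule.orthogonal_orthogonal_eq_closure, ortho_range_eq_ker_aux T hT]

theorem stmt14 (P A B : H →L[ℂ] H) (hP : IsOrthoProj P)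
    (hA : A.IsPositive) (hAP : (P - A).IsPositive)
    (hB : B.IsPositive) (hB2 : B ∘L B = A) :
    (LinearMap.range ((P - A : H →L[ℂ] H) : H →ₗ[ℂ] H)).topologicalClosure =
        (LinearMap.range ((P - A ∘L A : H →L[ℂ] H) : H →ₗ[ℂ] H)).topologicalClosure ∧
      (LinearMap.range ((P - A : H →L[ℂ] H) : H →ₗ[ℂ] H)).topologicalClosure =
        (LinearMap.range ((P - B : H →L[ℂ] H) : H →ₗ[ℂ] H)).topologicalClosure := by
  obtain ⟨hP2, hPsa⟩ := hP
  have hAsa : ContinuousLinearMap.adjoint A = A := hA.isSelfAdjoint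
  have hBsa : ContinuousLinearMap.adjoint B = B := hB.isSelfAdjoint
  have hBB : ∀ y, B (B y) = A y := fun y => by rw [← ContinuousLinearMap.comp_apply, hB2]
  -- self-adjointness of the three operators
  have h1 : ContinuousLinearMap.adjoint (P - A) = P - A := by
    rw [map_sub, hPsa, hAsa]
  have h2 : ContinuousLinearMap.adjoint (P - A ∘L A) = P - A ∘L A := by
    rw [map_sub, hPsa, ContinuousLinearMap.adjoint_comp, hAsa]
  have h3 : ContinuousLinearMap.adjoint (P - B) = P - B := by
    rw [map_sub, hPsa, hBsa]
  -- If P y = 0 then B y = 0 and A y = 0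
  have hPB0 : ∀ y, P y = 0 → B y = 0 := by
    intro y hy
    have hpos : 0 ≤ RCLike.re (inner ℂ ((P - A) y) y) := hAP.2 y
    have : (P - A) y = -(A y) := by simp [hy]
    rw [this, inner_neg_left] at hpos
    have hinner : (inner ℂ (A y) y) = inner ℂ (B y) (B y) := by
      rw [← hBB]
      nth_rewrite 1 [← hBsa]
      exact ContinuousLinearMap.adjoint_inner_left B y (B y)
    rw [hinner, map_neg, inner_self_eq_norm_sq] at hpos
    have : ‖B y‖ = 0 := by nlinarith [sq_nonneg ‖B y‖]
    exact norm_eq_zero.mp this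
  have hPA0 : ∀ y, P y = 0 → A y = 0 := fun y hy => by
    rw [← hBB, hPB0 y hy, map_zero]
  have hPP : ∀ y, P (P y) = P y := fun y => by rw [← ContinuousLinearMap.comp_apply, hP2]
  -- kernel characterizations
  have kerPA : ∀ x, (P - A) x = 0 ↔ P x = A x := fun x => by
    simp [sub_eq_zero]
  -- key facts for x in ker (P - A)
  have key1 : ∀ x, P x = A x → A (P x) = P x ∧ B (P x) = P x := by
    intro x hx
    have hAx : A x = A (P x) := by
      have : A (x - P x) = 0 := hPA0 _ (by simp [map_sub, hPP])
      rw [map_sub, sub_eq_zero] at this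
      exact this
    have hAy : A (P x) = P x := by rw [← hAx, ← hx]
    have hBy : B (P x) = P x := sq_fix_aux hB (by rw [hBB, hAy])
    exact ⟨hAy, hBy⟩
  -- equality of kernels
  have kereq1 : LinearMap.ker ((P - A : H →L[ℂ] H) : H →ₗ[ℂ] H) = LinearMap.ker ((P - A ∘L A : H →L[ℂ] H) : H →ₗ[ℂ] H) := by
    ext x
    simp only [LinearMap.mem_ker, ContinuousLinearMap.coe_coe,
      ContinuousLinearMap.sub_apply, ContinuousLinearMap.comp_apply, sub_eq_zero]
    constructor
    · intro hx
      obtain ⟨hAy, -⟩ := key1 x hx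
      rw [hx] at hAy ⊢
      exact hAy.symm
    · intro hx
      have hAx : A x = A (P x) := by
        have : A (x - P x) = 0 := hPA0 _ (by simp [map_sub, hPP])
        rw [map_sub, sub_eq_zero] at this
        exact this
      have hA2y : A (A (P x)) = P x := by
        rw [← hAx, ← hx]
      have hAy : A (P x) = P x := sq_fix_aux hA hA2y
      rw [hAx, hAy]
  have kereq2 : LinearMap.ker ((P - A : H →L[ℂ] H) : H →ₗ[ℂ] H) = LinearMap.ker ((P - B : H →L[ℂ] H) : H →ₗ[ℂ] H) := by
    ext x
    simp only [LinearMap.mem_ker, ContinuousLinearMap.coe_coe,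
      ContinuousLinearMap.sub_apply, sub_eq_zero]
    constructor
    · intro hx
      obtain ⟨_, hBy⟩ := key1 x hx
      have hBx : B x = B (P x) := by
        have : B (x - P x) = 0 := hPB0 _ (by simp [map_sub, hPP])
        rw [map_sub, sub_eq_zero] at this
        exact this
      rw [hBx, hBy]
    · intro hx
      have hBx : B x = B (P x) := by
        have : B (x - P x) = 0 := hPB0 _ (by simp [map_sub, hPP])
        rw [map_sub, sub_eq_zero] at this
        exact this
      have hBy : B (P x) = P x := hBx.symm.trans hx.symm
      have hAy : A (P x) = P x := by rw [← hBB, hBy, hBy]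
      have hAx : A x = A (P x) := by
        have : A (x - P x) = 0 := hPA0 _ (by simp [map_sub, hPP])
        rw [map_sub, sub_eq_zero] at this
        exact this
      rw [hAx, hAy]
  constructor
  · rw [closure_range_eq_aux _ h1, closure_range_eq_aux _ h2, kereq1]
  · rw [closure_range_eq_aux _ h1, closure_range_eq_aux _ h3, kereq2]
end

section
/- Let P be an orthogonal projection and A a positive operator with 0 ≤ A ≤ P on a Hilbert space H. Then cl R(A − A²) = cl R(A(P − A)) = cl R(P_A − A), where P_A is the orthogonal projection onto cl R(A). -/
open ContinuousLinearMap Submodule LinearMap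

variable {H : Type*} [NormedAddCommGroup H] [InnerProductSpace ℂ H] [CompleteSpace H]

section Aux

open RCLike

/-- Cauchy–Schwarz for a positive operator: vanishing quadratic form implies vanishing. -/
lemma aux_isPositive_apply_eq_zero {T : H →L[ℂ] H} (hT : T.IsPositive) {z : H}
    (h : inner ℂ (T z) z = 0) : T z = 0 := by
  have hsa : ContinuousLinearMap.adjoint T = T := hT.isSelfAdjoint.adjoint_eq
  have hsym : ∀ x y : H, inner ℂ (T x) y = inner ℂ x (T y) := fun x y => by
    conv_lhs => rw [← hsa]
    exact ContinuousLinearMap.adjoint_inner_left T y x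
  let c : PreInnerProductSpace.Core ℂ H :=
  { inner := fun x y => inner ℂ x (T y)
    conj_inner_symm := fun x y => by
      show (starRingEnd ℂ) (inner ℂ y (T x)) = inner ℂ x (T y)
      rw [← hsym y x, inner_conj_symm]
    re_inner_nonneg := fun x => by
      show 0 ≤ re (inner ℂ x (T x))
      rw [← hsym x x]; exact hT.re_inner_nonneg_left x
    add_left := fun x y z => inner_add_left _ _ _
    smul_left := fun x y r => inner_smul_left _ _ _ }
  have hz : ∀ y : H, inner ℂ y (T z) = 0 := by
    intro y
    have key := @InnerProductSpace.Core.inner_mul_inner_self_le ℂ H _ _ _ c z y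
    have e0 : inner ℂ z (T z) = 0 := by rw [← hsym z z, h]
    have e1 : ‖inner ℂ z (T y)‖ = ‖inner ℂ y (T z)‖ := by
      rw [← hsym z y, ← inner_conj_symm (T z) y, norm_conj]
    have key' : ‖inner ℂ y (T z)‖ * ‖inner ℂ y (T z)‖ ≤ 0 := by
      have : re (inner ℂ z (T z)) = 0 := by rw [e0]; simp
      calc ‖inner ℂ y (T z)‖ * ‖inner ℂ y (T z)‖
          = ‖inner ℂ z (T y)‖ * ‖inner ℂ y (T z)‖ := by rw [e1]
        _ ≤ re (inner ℂ z (T z)) * re (inner ℂ y (T y)) := key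
        _ = 0 := by rw [this, zero_mul]
    have := norm_nonneg (inner ℂ y (T z))
    have hn : ‖inner ℂ y (T z)‖ = 0 := by nlinarith
    exact norm_eq_zero.mp hn
  have := hz (T z)
  exact inner_self_eq_zero.mp this

/-- For a self-adjoint operator, the orthogonal complement of the range is the kernel. -/
lemma aux_orth_range {T : H →L[ℂ] H} (hT : ContinuousLinearMap.adjoint T = T) :
    (LinearMap.range (T : H →ₗ[ℂ] H))ᗮ = LinearMap.ker (T : H →ₗ[ℂ] H) := by
  ext x
  rw [Submodule.mem_orthogonal, LinearMap.mem_ker]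
  constructor
  · intro hx
    have h1 : ∀ y : H, inner ℂ y (T x) = 0 := by
      intro y
      calc inner ℂ y (T x) = inner ℂ y ((ContinuousLinearMap.adjoint T) x) := by rw [hT]
        _ = inner ℂ (T y) x := ContinuousLinearMap.adjoint_inner_right T y x
        _ = 0 := hx (T y) ⟨y, rfl⟩
    exact inner_self_eq_zero.mp (h1 (T x))
  · rintro hx u ⟨y, rfl⟩
    show inner ℂ (T y) x = 0
    rw [← ContinuousLinearMap.adjoint_inner_right T y x, hT, (show T x = 0 from hx), inner_zero_right]

lemma aux_closure_range {T : H →L[ℂ] H} (hT : ContinuousLinearMap.adjoint T = T) :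
    (LinearMap.range (T : H →ₗ[ℂ] H)).topologicalClosure = (LinearMap.ker (T : H →ₗ[ℂ] H))ᗮ := by
  rw [← Submodule.orthogonal_orthogonal_eq_closure, aux_orth_range hT]

end Aux

theorem stmt15 (P A : H →L[ℂ] H) (hP : IsOrthoProj P)
    (hA : A.IsPositive) (hAP : (P - A).IsPositive) :
    (LinearMap.range ((A - A ∘L A : H →L[ℂ] H) : H →ₗ[ℂ] H)).topologicalClosure =
        (LinearMap.range ((A ∘L (P - A) : H →L[ℂ] H) : H →ₗ[ℂ] H)).topologicalClosure ∧
      (LinearMap.range ((A - A ∘L A : H →L[ℂ] H) : H →ₗ[ℂ] H)).topologicalClosure =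
        (LinearMap.range ((projOn (LinearMap.range (A : H →ₗ[ℂ] H)).topologicalClosure - A : H →L[ℂ] H) : H →ₗ[ℂ] H)).topologicalClosure := by
  obtain ⟨hP2, hPsa⟩ := hP
  have hAsa : ContinuousLinearMap.adjoint A = A := hA.isSelfAdjoint.adjoint_eq
  -- Step 1 : A ∘L P = A
  have hAzero : ∀ x : H, A (x - P x) = 0 := by
    intro x
    set w := x - P x with hw
    have hPw : P w = 0 := by
      have : P (P x) = P x := congrFun (congrArg DFunLike.coe hP2) x
      simp [hw, map_sub, this]
    apply aux_isPositive_apply_eq_zero hA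
    have hre1 := ((ContinuousLinearMap.isPositive_iff_complex A).mp hA w)
    have hre2 := ((ContinuousLinearMap.isPositive_iff_complex (P - A)).mp hAP w)
    have hPA : inner ℂ ((P - A) w) w = - inner ℂ (A w) w := by
      simp [ContinuousLinearMap.sub_apply, hPw, inner_sub_left]
    rw [hPA] at hre2
    obtain ⟨h1a, h1b⟩ := hre1
    obtain ⟨h2a, h2b⟩ := hre2
    have : RCLike.re (inner ℂ (A w) w) = 0 := by
      have := h2b
      rw [map_neg] at this
      linarith
    rw [← h1a, this]
    simp
  have hAP1 : A ∘L P = A := by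
    ext x
    have := hAzero x
    rw [map_sub, sub_eq_zero] at this
    exact this.symm
  -- first equality: the operators are equal
  have hop : A - A ∘L A = A ∘L (P - A) := by
    rw [ContinuousLinearMap.comp_sub, hAP1]
  refine ⟨by rw [hop], ?_⟩
  -- Step 2
  set K := (LinearMap.range (A : H →ₗ[ℂ] H)).topologicalClosure with hKdef
  set Q := projOn K with hQdef
  have hQsa : ContinuousLinearMap.adjoint Q = Q := (isSelfAdjoint_starProjection K).adjoint_eq
  have hQmem : ∀ x : H, Q x ∈ K := fun x => (orthogonalProjection K x).2
  have hQfix : ∀ x ∈ K, Q x = x := fun x hx => by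
    show ((orthogonalProjection K x : H)) = x
    exact starProjection_eq_self_iff.mpr hx
  have hQorth : ∀ x : H, x - Q x ∈ Kᗮ := fun x => sub_starProjection_mem_orthogonal x
  have hrange_le : LinearMap.range (A : H →ₗ[ℂ] H) ≤ K := Submodule.le_topologicalClosure _
  have hKo : Kᗮ = LinearMap.ker (A : H →ₗ[ℂ] H) := by
    rw [hKdef, ← Submodule.orthogonal_orthogonal_eq_closure,
      Submodule.triorthogonal_eq_orthogonal, aux_orth_range hAsa]
  -- self-adjointness of the two operators
  have hsa1 : ContinuousLinearMap.adjoint (A - A ∘L A) = A - A ∘L A := by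
    rw [map_sub, ContinuousLinearMap.adjoint_comp, hAsa]
  have hsa2 : ContinuousLinearMap.adjoint (Q - A) = Q - A := by
    rw [map_sub, hQsa, hAsa]
  -- A ∘L Q = A
  have hQA : Q ∘L A = A := by
    ext x
    exact hQfix (A x) (hrange_le ⟨x, rfl⟩)
  have hAQ : A ∘L Q = A := by
    have : ContinuousLinearMap.adjoint (Q ∘L A) = A ∘L Q := by
      rw [ContinuousLinearMap.adjoint_comp, hAsa, hQsa]
    rw [← this, hQA, hAsa]
  -- kernels agree
  have hker : LinearMap.ker ((A - A ∘L A : H →L[ℂ] H) : H →ₗ[ℂ] H) = LinearMap.ker ((Q - A : H →L[ℂ] H) : H →ₗ[ℂ] H) := by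
    ext x
    simp only [LinearMap.mem_ker, ContinuousLinearMap.coe_coe, ContinuousLinearMap.coe_sub', Pi.sub_apply,
      ContinuousLinearMap.coe_comp', Function.comp_apply, sub_eq_zero]
    constructor
    · intro h  -- h : A x = A (A x)
      have hzker : A (x - Q x) = 0 := by
        have hm := hQorth x
        rw [hKo, LinearMap.mem_ker] at hm
        exact hm
      have hAx : A x = A (Q x) := by
        have h0 := map_sub A x (Q x)
        rw [hzker] at h0
        exact sub_eq_zero.mp h0.symm
      set y := Q x with hy
      have h2 : A y = A (A y) := by
        calc A y = A x := hAx.symm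
          _ = A (A x) := h
          _ = A (A y) := by rw [hAx]
      have h3 : y - A y ∈ LinearMap.ker (A : H →ₗ[ℂ] H) := by
        rw [LinearMap.mem_ker, ContinuousLinearMap.coe_coe, map_sub, ← h2, sub_self]
      have h4 : y - A y ∈ K := K.sub_mem (hQmem x) (hrange_le ⟨y, rfl⟩)
      have h5 : y - A y ∈ Kᗮ := by rw [hKo]; exact h3
      have h6 : y - A y = 0 := by
        have h7 := (Submodule.mem_orthogonal K (y - A y)).mp h5 (y - A y) h4
        exact inner_self_eq_zero.mp h7
      rw [hAx]
      exact sub_eq_zero.mp h6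
    · intro h  -- h : Q x = A x
      have : A (A x) = A (Q x) := by rw [h]
      rw [this]
      have : A (Q x) = (A ∘L Q) x := rfl
      rw [this, hAQ]
  -- conclude
  rw [aux_closure_range hsa1, aux_closure_range hsa2, hker]
end

section
/- Let P, Q be orthogonal projections on a Hilbert space H such that S := PQP has closed range, and let T = PQ be such that (P,Q) is the canonical pair, i.e. P = P_{R(T)}, Q = P_{N(T)^⊥}. Then ‖P − Q‖² = ‖P_{R(S)} − S‖. -/
set_option maxHeartbeats 1000000


open ContinuousLinearMap Submodule LinearMap

variable {H : Type*} [NormedAddCommGroup H] [InnerProductSpace ℂ H] [CompleteSpace H]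

local notation "⟪" x ", " y "⟫" => @inner ℂ _ _ x y

namespace Stmt16Aux

lemma sq_le' {e c : ℝ} (he : 0 ≤ e) (hc : 0 ≤ c) (h : e ^ 2 ≤ c ^ 2) : e ≤ c := by
  nlinarith

lemma apply_idem {P : H →L[ℂ] H} (hP : IsOrthoProj P) (x : H) : P (P x) = P x := by
  have := ContinuousLinearMap.ext_iff.1 hP.1 x
  simpa using this

lemma inner_proj {P : H →L[ℂ] H} (hP : IsOrthoProj P) (x y : H) :
    ⟪P x, y⟫ = ⟪x, P y⟫ := by
  conv_lhs => rw [← hP.2]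
  exact ContinuousLinearMap.adjoint_inner_left P y x

lemma pyth {P : H →L[ℂ] H} (hP : IsOrthoProj P) (x : H) :
    ‖x - P x‖ ^ 2 = ‖x‖ ^ 2 - ‖P x‖ ^ 2 := by
  have h1 : ⟪x, P x⟫ = ⟪P x, P x⟫ := by
    conv_lhs => rw [← apply_idem hP x]
    exact (inner_proj hP x (P x)).symm
  rw [norm_sub_sq (𝕜 := ℂ), h1, inner_self_eq_norm_sq]
  ring

lemma norm_proj_le {P : H →L[ℂ] H} (hP : IsOrthoProj P) (x : H) : ‖P x‖ ≤ ‖x‖ := by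
  have h := pyth hP x
  nlinarith [sq_nonneg ‖x - P x‖, norm_nonneg (P x), norm_nonneg x]

lemma one_sub_proj {P : H →L[ℂ] H} (hP : IsOrthoProj P) : IsOrthoProj (1 - P) := by
  constructor
  · ext x
    simp [ContinuousLinearMap.sub_apply, ContinuousLinearMap.one_apply, map_sub,
      apply_idem hP]
  · rw [← ContinuousLinearMap.star_eq_adjoint, star_sub, star_one,
      ContinuousLinearMap.star_eq_adjoint, hP.2]

lemma projOn_congr {K L : Submodule ℂ H} [CompleteSpace K] [CompleteSpace L] (h : K = L) :
    projOn K = projOn L := by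
  subst h; rfl

lemma orth_range (A : H →L[ℂ] H) :
    (LinearMap.range (A : H →ₗ[ℂ] H))ᗮ =
      LinearMap.ker ((ContinuousLinearMap.adjoint A : H →L[ℂ] H) : H →ₗ[ℂ] H) := by
  ext x
  simp only [Submodule.mem_orthogonal, LinearMap.mem_range, LinearMap.mem_ker]
  constructor
  · intro h
    have h' : ⟪ContinuousLinearMap.adjoint A x, ContinuousLinearMap.adjoint A x⟫ = 0 := by
      rw [ContinuousLinearMap.adjoint_inner_right]
      exact h _ ⟨_, rfl⟩
    exact inner_self_eq_zero.mp h'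
  · rintro h u ⟨y, rfl⟩
    have : ⟪A y, x⟫ = ⟪y, ContinuousLinearMap.adjoint A x⟫ := by
      rw [ContinuousLinearMap.adjoint_inner_right]
    simp only [ContinuousLinearMap.coe_coe] at h ⊢
    rw [this, h, inner_zero_right]

end Stmt16Aux

open Stmt16Aux

theorem stmt16 (P Q T S : H →L[ℂ] H) (hP : IsOrthoProj P) (hQ : IsOrthoProj Q)
    (hT : T = P ∘L Q) (hS : S = P ∘L Q ∘L P)
    (hScl : IsClosed ((LinearMap.range (S : H →ₗ[ℂ] H) : Submodule ℂ H) : Set H))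
    (hPc : P = projOn (LinearMap.range (T : H →ₗ[ℂ] H)).topologicalClosure)
    (hQc : Q = projOn (LinearMap.ker (T : H →ₗ[ℂ] H))ᗮ) :
    ‖P - Q‖ ^ 2 = ‖projOn (LinearMap.range (S : H →ₗ[ℂ] H)).topologicalClosure - S‖ := by
  have ha0 : (0:ℝ) ≤ ‖(1 - Q) ∘L P‖ := norm_nonneg _
  set a : ℝ := ‖(1 - Q) ∘L P‖ with hadef
  -- adjoint facts
  have hAadj : ContinuousLinearMap.adjoint ((1 - Q) ∘L P) = P ∘L (1 - Q) := by
    rw [ContinuousLinearMap.adjoint_comp, hP.2, (one_sub_proj hQ).2]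
  have hTadj : ContinuousLinearMap.adjoint T = Q ∘L P := by
    rw [hT, ContinuousLinearMap.adjoint_comp, hP.2, hQ.2]
  -- closure of range S = closure of range T
  have hSadj : ContinuousLinearMap.adjoint S = S := by
    rw [hS, ContinuousLinearMap.adjoint_comp, ContinuousLinearMap.adjoint_comp, hP.2, hQ.2]
    exact ContinuousLinearMap.comp_assoc _ _ _
  have horthS : (LinearMap.range (S : H →ₗ[ℂ] H))ᗮ = (LinearMap.range (T : H →ₗ[ℂ] H))ᗮ := by
    rw [orth_range, orth_range, hSadj, hTadj]
    ext x
    simp only [LinearMap.mem_ker, ContinuousLinearMap.coe_coe]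
    constructor
    · intro hx
      have h0 : ⟪(Q ∘L P) x, (Q ∘L P) x⟫ = 0 := by
        have e1 : ⟪(Q ∘L P) x, (Q ∘L P) x⟫ = ⟪x, S x⟫ := by
          simp only [ContinuousLinearMap.comp_apply]
          calc ⟪Q (P x), Q (P x)⟫ = ⟪P x, Q (Q (P x))⟫ := inner_proj hQ _ _
            _ = ⟪P x, Q (P x)⟫ := by rw [apply_idem hQ]
            _ = ⟪x, P (Q (P x))⟫ := inner_proj hP _ _
            _ = ⟪x, S x⟫ := by rw [hS]; simp [ContinuousLinearMap.comp_apply]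
        rw [e1, hx, inner_zero_right]
      exact inner_self_eq_zero.mp h0
    · intro hx
      have : S x = P ((Q ∘L P) x) := by rw [hS]; simp [ContinuousLinearMap.comp_apply]
      rw [this, hx, map_zero]
  have hclos : (LinearMap.range (S : H →ₗ[ℂ] H)).topologicalClosure = (LinearMap.range (T : H →ₗ[ℂ] H)).topologicalClosure := by
    rw [← Submodule.orthogonal_orthogonal_eq_closure,
      ← Submodule.orthogonal_orthogonal_eq_closure, horthS]
  -- ker T orthogonal = closure of range (Q ∘L P)
  have horthker : (LinearMap.ker (T : H →ₗ[ℂ] H))ᗮ = (LinearMap.range ((Q ∘L P : H →L[ℂ] H) : H →ₗ[ℂ] H)).topologicalClosure := by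
    have h1 : (LinearMap.range ((Q ∘L P : H →L[ℂ] H) : H →ₗ[ℂ] H))ᗮ = LinearMap.ker (T : H →ₗ[ℂ] H) := by
      rw [orth_range]
      congr 1
      rw [ContinuousLinearMap.adjoint_comp, hP.2, hQ.2, hT]
    calc (LinearMap.ker (T : H →ₗ[ℂ] H))ᗮ = ((LinearMap.range ((Q ∘L P : H →L[ℂ] H) : H →ₗ[ℂ] H))ᗮ)ᗮ := by rw [h1]
      _ = (LinearMap.range ((Q ∘L P : H →L[ℂ] H) : H →ₗ[ℂ] H)).topologicalClosure :=
        Submodule.orthogonal_orthogonal_eq_closure _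
  -- ‖P - S‖ = a * a
  have hPS : ‖P - S‖ = a * a := by
    rw [hadef, ← ContinuousLinearMap.norm_adjoint_comp_self ((1 - Q) ∘L P)]
    congr 1
    rw [hAadj]
    ext x
    simp only [ContinuousLinearMap.comp_apply, ContinuousLinearMap.sub_apply,
      ContinuousLinearMap.one_apply, map_sub, apply_idem hP, apply_idem hQ, hS]
    abel
  -- ‖P ∘L (1 - Q)‖ = a
  have hPQ1 : ‖P ∘L (1 - Q)‖ = a := by
    rw [← hAadj]
    exact LinearIsometryEquiv.norm_map ContinuousLinearMap.adjoint _
  -- ‖1 - Q‖ ≤ 1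
  have hQnorm : ‖(1 : H →L[ℂ] H) - Q‖ ≤ 1 := by
    refine ContinuousLinearMap.opNorm_le_bound _ zero_le_one fun x => ?_
    have := norm_proj_le (one_sub_proj hQ) x
    simpa using this
  -- a ≤ ‖P - Q‖
  have hge : a ≤ ‖P - Q‖ := by
    have hid : (1 - Q) ∘L P = (1 - Q) ∘L (P - Q) := by
      ext x
      simp only [ContinuousLinearMap.comp_apply, ContinuousLinearMap.sub_apply,
        ContinuousLinearMap.one_apply, map_sub, apply_idem hQ]
      abel
    calc a = ‖(1 - Q) ∘L (P - Q)‖ := by rw [hadef, hid]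
      _ ≤ ‖(1 : H →L[ℂ] H) - Q‖ * ‖P - Q‖ := ContinuousLinearMap.opNorm_comp_le _ _
      _ ≤ 1 * ‖P - Q‖ := mul_le_mul_of_nonneg_right hQnorm (norm_nonneg _)
      _ = ‖P - Q‖ := one_mul _
  -- key pointwise estimate on the range of Q
  have hQP : ∀ y, Q y = y → ‖y - P y‖ ≤ a * ‖y‖ := by
    rcases le_or_gt 1 a with h1 | h1
    · intro y hy
      have h2 : ‖y - P y‖ ≤ ‖y‖ := by
        have := norm_proj_le (one_sub_proj hP) y
        simpa using this
      calc ‖y - P y‖ ≤ ‖y‖ := h2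
        _ ≤ a * ‖y‖ := le_mul_of_one_le_left (norm_nonneg _) h1
    · set c : ℝ := Real.sqrt (1 - a ^ 2) with hc
      have hc2 : c ^ 2 = 1 - a ^ 2 := Real.sq_sqrt (by nlinarith)
      have hcpos : 0 < c := Real.sqrt_pos.mpr (by nlinarith)
      have step1 : ∀ w, P w = w → c * ‖w‖ ≤ ‖Q w‖ := by
        intro w hw
        have h3 : ‖w - Q w‖ ≤ a * ‖w‖ := by
          have e1 : ((1 - Q) ∘L P) w = w - Q w := by
            simp [ContinuousLinearMap.comp_apply, ContinuousLinearMap.sub_apply,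
              ContinuousLinearMap.one_apply, hw]
          calc ‖w - Q w‖ = ‖((1 - Q) ∘L P) w‖ := by rw [e1]
            _ ≤ a * ‖w‖ := ContinuousLinearMap.le_opNorm _ _
        have h4 := pyth hQ w
        refine sq_le' (mul_nonneg hcpos.le (norm_nonneg _)) (norm_nonneg _) ?_
        have h5 : ‖w - Q w‖ ^ 2 ≤ (a * ‖w‖) ^ 2 := pow_le_pow_left₀ (norm_nonneg _) h3 2
        rw [mul_pow, hc2]
        rw [mul_pow] at h5
        nlinarith [h4, h5]
      have step2 : ∀ z : H, c * ‖Q (P z)‖ ≤ ‖T (Q (P z))‖ := by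
        intro z
        have hw : P (P z) = P z := apply_idem hP z
        set w : H := P z with hwdef
        set y : H := Q w with hydef
        have hyy : ‖y‖ ^ 2 ≤ ‖w‖ * ‖T y‖ := by
          have e1 : ⟪y, y⟫ = ⟪w, T y⟫ := by
            calc ⟪Q w, y⟫ = ⟪w, Q y⟫ := inner_proj hQ w y
              _ = ⟪P w, Q y⟫ := by rw [hw]
              _ = ⟪w, P (Q y)⟫ := inner_proj hP w (Q y)
              _ = ⟪w, T y⟫ := by rw [hT]; simp [ContinuousLinearMap.comp_apply]
          calc ‖y‖ ^ 2 = RCLike.re ⟪y, y⟫ := (inner_self_eq_norm_sq y).symm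
            _ = RCLike.re ⟪w, T y⟫ := by rw [e1]
            _ ≤ ‖w‖ * ‖T y‖ := re_inner_le_norm w (T y)
        have h2 : c * ‖w‖ ≤ ‖y‖ := step1 w hw
        rcases eq_or_lt_of_le (norm_nonneg y) with h0 | h0
        · rw [← h0, mul_zero]
          exact norm_nonneg _
        · have hmul : c * ‖y‖ * ‖y‖ ≤ ‖T y‖ * ‖y‖ := by
            calc c * ‖y‖ * ‖y‖ = c * ‖y‖ ^ 2 := by ring
              _ ≤ c * (‖w‖ * ‖T y‖) := mul_le_mul_of_nonneg_left hyy hcpos.le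
              _ = (c * ‖w‖) * ‖T y‖ := by ring
              _ ≤ ‖y‖ * ‖T y‖ := mul_le_mul_of_nonneg_right h2 (norm_nonneg _)
              _ = ‖T y‖ * ‖y‖ := by ring
          exact le_of_mul_le_mul_right hmul h0
      have hFclosed : IsClosed {y : H | c * ‖y‖ ≤ ‖T y‖} :=
        isClosed_le (continuous_const.mul continuous_norm) T.continuous.norm
      have hsub : ((LinearMap.ker (T : H →ₗ[ℂ] H))ᗮ : Set H) ⊆ {y : H | c * ‖y‖ ≤ ‖T y‖} := by
        rw [horthker, Submodule.topologicalClosure_coe]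
        refine closure_minimal ?_ hFclosed
        rintro y ⟨z, rfl⟩
        simpa [ContinuousLinearMap.comp_apply] using step2 z
      intro y hy
      have hymem : y ∈ (LinearMap.ker (T : H →ₗ[ℂ] H))ᗮ := by
        rw [hQc] at hy
        simp only [projOn, ContinuousLinearMap.comp_apply, Submodule.subtypeL_apply] at hy
        exact Submodule.starProjection_eq_self_iff.mp hy
      have hTy : c * ‖y‖ ≤ ‖T y‖ := hsub hymem
      have hPy : P y = T y := by
        rw [hT]; simp [ContinuousLinearMap.comp_apply, hy]
      refine sq_le' (norm_nonneg _) (mul_nonneg ha0 (norm_nonneg _)) ?_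
      have h4 := pyth hP y
      have h5 : (c * ‖y‖) ^ 2 ≤ ‖T y‖ ^ 2 :=
        pow_le_pow_left₀ (mul_nonneg hcpos.le (norm_nonneg _)) hTy 2
      rw [mul_pow] at h5 ⊢
      rw [h4, hPy]
      nlinarith [h5, hc2]
  -- ‖P - Q‖ ≤ a
  have hle : ‖P - Q‖ ≤ a := by
    refine ContinuousLinearMap.opNorm_le_bound _ ha0 fun x => ?_
    have hdec : (P - Q) x = P ((1 - Q) x) - (Q x - P (Q x)) := by
      simp only [ContinuousLinearMap.sub_apply, ContinuousLinearMap.one_apply, map_sub]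
      abel
    have hinn : ⟪P ((1 - Q) x), Q x - P (Q x)⟫ = 0 := by
      rw [inner_proj hP, map_sub, apply_idem hP, sub_self, inner_zero_right]
    have hnormsq : ‖(P - Q) x‖ ^ 2 = ‖P ((1 - Q) x)‖ ^ 2 + ‖Q x - P (Q x)‖ ^ 2 := by
      rw [hdec, norm_sub_sq (𝕜 := ℂ), hinn]
      simp
    have h1Q : (1 - Q) ((1 - Q) x) = (1 - Q) x := by
      simp only [ContinuousLinearMap.sub_apply, ContinuousLinearMap.one_apply, map_sub,
        apply_idem hQ]
      abel
    have hu : ‖P ((1 - Q) x)‖ ≤ a * ‖(1 - Q) x‖ := by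
      calc ‖P ((1 - Q) x)‖ = ‖(P ∘L (1 - Q)) ((1 - Q) x)‖ := by
            rw [ContinuousLinearMap.comp_apply, h1Q]
        _ ≤ ‖P ∘L (1 - Q)‖ * ‖(1 - Q) x‖ := ContinuousLinearMap.le_opNorm _ _
        _ = a * ‖(1 - Q) x‖ := by rw [hPQ1]
    have hv : ‖Q x - P (Q x)‖ ≤ a * ‖Q x‖ := hQP (Q x) (apply_idem hQ x)
    have hpq : ‖(1 - Q) x‖ ^ 2 = ‖x‖ ^ 2 - ‖Q x‖ ^ 2 := by
      have := pyth hQ x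
      simpa [ContinuousLinearMap.sub_apply, ContinuousLinearMap.one_apply] using this
    refine sq_le' (norm_nonneg _) (mul_nonneg ha0 (norm_nonneg _)) ?_
    have hu2 : ‖P ((1 - Q) x)‖ ^ 2 ≤ a ^ 2 * ‖(1 - Q) x‖ ^ 2 := by
      have := pow_le_pow_left₀ (norm_nonneg _) hu 2
      rwa [mul_pow] at this
    have hv2 : ‖Q x - P (Q x)‖ ^ 2 ≤ a ^ 2 * ‖Q x‖ ^ 2 := by
      have := pow_le_pow_left₀ (norm_nonneg _) hv 2
      rwa [mul_pow] at this
    have hkey : a ^ 2 * ‖(1 - Q) x‖ ^ 2 = a ^ 2 * ‖x‖ ^ 2 - a ^ 2 * ‖Q x‖ ^ 2 := by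
      rw [hpq]; ring
    rw [hnormsq, mul_pow]
    linarith [hu2, hv2, hkey]
  have heq : ‖P - Q‖ = a := le_antisymm hle hge
  have hproj : projOn (LinearMap.range (S : H →ₗ[ℂ] H)).topologicalClosure = P :=
    (projOn_congr hclos).trans hPc.symm
  rw [hproj, heq, hPS, pow_two]
end
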